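/- The Cartesian product C[m] × P[n+1] of a cycle on m ≥ 3 vertices and a path on n+1 vertices is antimagic for all n ≥ 2. -/

import Mathlib

open Finset SimpleGraph

open scoped Classical in
/-- The sum of the labels of all edges incident to `v`. -/
noncomputable def vertexSum {V : Type*} [Fintype V] (G : SimpleGraph V)
    (f : Sym2 V → ℕ) (v : V) : ℕ :=
  ∑ w ∈ Finset.univ.filter (fun w => G.Adj v w), f s(v, w)

/-- A graph with `q` edges is antimagic if there is a bijection from its edge set to
`{1, …, q}` such that all induced vertex sums are pairwise distinct. -/
noncomputable def IsAntimagic {V : Type*} [Fintype V] (G : SimpleGraph V) : Prop :=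
  ∃ f : Sym2 V → ℕ, Set.BijOn f G.edgeSet (Set.Icc 1 G.edgeSet.ncard) ∧
    Function.Injective (vertexSum G f)

/-- σ: evens ascending then odds descending, a permutation of {0..m-1}. -/
def zsig (m i : ℕ) : ℕ := if 2*i < m then 2*i else 2*(m-i)-1
/-- ρ: odds ascending then evens descending. -/
def zrho (m i : ℕ) : ℕ := if 2*(m-1-i) < m then 2*(m-1-i) else 2*i+1
/-- predecessor mod m -/
def prevv (m i : ℕ) : ℕ := if i = 0 then m-1 else i-1

lemma zsig_lt {m i : ℕ} (hm : 3 ≤ m) (h : i < m) : zsig m i < m := by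
  unfold zsig; split <;> omega
lemma zrho_lt {m i : ℕ} (hm : 3 ≤ m) (h : i < m) : zrho m i < m := by
  unfold zrho; split <;> omega
lemma prevv_lt {m i : ℕ} (hm : 3 ≤ m) (h : i < m) : prevv m i < m := by
  unfold prevv; split <;> omega
lemma zsig_inj {m i i' : ℕ} (hm : 3 ≤ m) (h : i < m) (h' : i' < m)
    (he : zsig m i = zsig m i') : i = i' := by
  unfold zsig at he; split at he <;> split at he <;> omega
lemma zrho_inj {m i i' : ℕ} (hm : 3 ≤ m) (h : i < m) (h' : i' < m)
    (he : zrho m i = zrho m i') : i = i' := by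
  unfold zrho at he; split at he <;> split at he <;> omega

/-- interior row injectivity -/
lemma TI_inj {m i i' : ℕ} (hm : 3 ≤ m) (h : i < m) (h' : i' < m)
    (he : zrho m (prevv m i) + zrho m i + 2*zsig m i
        = zrho m (prevv m i') + zrho m i' + 2*zsig m i') : i = i' := by
  unfold prevv zrho zsig at he
  split_ifs at he <;> omega

/-- boundary row injectivity -/
lemma TB_inj {m i i' : ℕ} (hm : 3 ≤ m) (h : i < m) (h' : i' < m)
    (he : zrho m (prevv m i) + zrho m i + zsig m i
        = zrho m (prevv m i') + zrho m i' + zsig m i') : i = i' := by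
  unfold prevv zrho zsig at he
  split_ifs at he <;> omega


/-- blocks decompose uniquely -/
lemma block_eq {m b b' r r' : ℕ} (hr : r < m) (hr' : r' < m)
    (h : b*m + r = b'*m + r') : b = b' ∧ r = r' := by
  rcases lt_trichotomy b b' with hb | hb | hb
  · exfalso
    have h2 : (b+1)*m ≤ b'*m := Nat.mul_le_mul_right m (by omega)
    have h3 : (b+1)*m = b*m + m := by ring
    omega
  · subst hb; omega
  · exfalso
    have h2 : (b'+1)*m ≤ b*m := Nat.mul_le_mul_right m (by omega)
    have h3 : (b'+1)*m = b'*m + m := by ring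
    omega

lemma row_cancel {m a b t t' : ℕ} (ht : t < 4*m) (ht' : t' < 4*m)
    (h : a*m + t = b*m + t') : a < b + 4 ∧ b < a + 4 := by
  constructor
  · by_contra hc
    have h2 : (b+4)*m ≤ a*m := Nat.mul_le_mul_right m (by omega)
    have h3 : (b+4)*m = b*m + 4*m := by ring
    omega
  · by_contra hc
    have h2 : (a+4)*m ≤ b*m := Nat.mul_le_mul_right m (by omega)
    have h3 : (a+4)*m = a*m + 4*m := by ring
    omega

/-- cyclic successor relation on ℕ values -/
def hsucc (m a b : ℕ) : Prop := b = a + 1 ∨ (a = m - 1 ∧ b = 0)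

instance (m a b : ℕ) : Decidable (hsucc m a b) := by unfold hsucc; infer_instance

lemma mod_spec (a b : ℕ) (h : a < 2*b) (h3 : 0 < b) :
    a % b = if a < b then a else a - b := by
  split
  · exact Nat.mod_eq_of_lt ‹_›
  · rw [Nat.mod_eq_sub_mod (by omega), Nat.mod_eq_of_lt (by omega)]

lemma sub_one_val {m' : ℕ} (i : Fin (m' + 3)) :
    (i - 1).val = if i.val = 0 then m' + 2 else i.val - 1 := by
  have hd : (i - 1).val = (m' + 3 - ((1 : Fin (m' + 3))).val + i.val) % (m' + 3) := by
    rw [Fin.sub_def]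
  have h1 : ((1 : Fin (m' + 3))).val = 1 := rfl
  have hi := i.isLt
  rw [h1] at hd
  rw [mod_spec _ _ (by omega) (by omega)] at hd
  rw [hd]; split <;> split <;> omega

lemma add_one_val {m' : ℕ} (i : Fin (m' + 3)) :
    (i + 1).val = if i.val = m' + 2 then 0 else i.val + 1 := by
  have hd : (i + 1).val = (i.val + ((1 : Fin (m' + 3))).val) % (m' + 3) := by
    rw [Fin.add_def]
  have h1 : ((1 : Fin (m' + 3))).val = 1 := rfl
  have hi := i.isLt
  rw [h1] at hd
  rw [mod_spec _ _ (by omega) (by omega)] at hd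
  rw [hd]; split <;> split <;> omega

lemma cycle_adj_iff {m' : ℕ} {i i' : Fin (m' + 3)} :
    (cycleGraph (m' + 3)).Adj i i' ↔
      hsucc (m' + 3) i.val i'.val ∨ hsucc (m' + 3) i'.val i.val := by
  have h : (cycleGraph ((m' + 1) + 2)).Adj i i' ↔ i - i' = 1 ∨ i' - i = 1 := cycleGraph_adj
  rw [h]
  have hd : (i - i').val = (m' + 3 - i'.val + i.val) % (m' + 3) := by rw [Fin.sub_def]
  have hd' : (i' - i).val = (m' + 3 - i.val + i'.val) % (m' + 3) := by rw [Fin.sub_def]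
  have h1 : ((1 : Fin (m' + 3))).val = 1 := rfl
  have hi := i.isLt
  have hi' := i'.isLt
  rw [Fin.ext_iff, Fin.ext_iff, h1, hd, hd']
  rw [mod_spec _ _ (by omega) (by omega), mod_spec _ _ (by omega) (by omega)]
  unfold hsucc
  split <;> split <;> omega
/-- horizontal block for row j -/
def BB (n j : ℕ) : ℕ := if j < n then n+1+j else 0

/-- the edge labeling, as a symmetric function on pairs of vertices -/
def lab (m n : ℕ) (v w : Fin m × Fin (n+1)) : ℕ :=
  if v.1.val = w.1.val ∧ v.2.val + 1 = w.2.val then (v.2.val+1)*m + zsig m v.1.val + 1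
  else if v.1.val = w.1.val ∧ w.2.val + 1 = v.2.val then (w.2.val+1)*m + zsig m v.1.val + 1
  else if v.2.val = w.2.val ∧ hsucc m v.1.val w.1.val then BB n v.2.val * m + zrho m v.1.val + 1
  else if v.2.val = w.2.val ∧ hsucc m w.1.val v.1.val then BB n v.2.val * m + zrho m w.1.val + 1
  else 0

lemma lab_symm (m n : ℕ) (hm : 3 ≤ m) :
    ∀ v w : Fin m × Fin (n+1), lab m n v w = lab m n w v := by
  rintro ⟨⟨a,ha⟩,⟨b,hb⟩⟩ ⟨⟨c,hc⟩,⟨d,hd⟩⟩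
  unfold lab hsucc
  dsimp only
  split_ifs <;> first | rfl | omega |
    (repeat' (casesm* _ ∧ _, _ ∨ _)) <;> subst_vars <;> first | rfl | omega

section Eval
variable {m n : ℕ}

lemma lab_vert (hm : 3 ≤ m) (i : Fin m) (j j' : Fin (n+1)) (h : j.val + 1 = j'.val) :
    lab m n (i,j) (i,j') = (j.val+1)*m + zsig m i.val + 1 := by
  unfold lab
  rw [if_pos ⟨rfl, h⟩]

lemma lab_vert' (hm : 3 ≤ m) (i : Fin m) (j j' : Fin (n+1)) (h : j.val + 1 = j'.val) :
    lab m n (i,j') (i,j) = (j.val+1)*m + zsig m i.val + 1 := by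
  unfold lab
  rw [if_neg (by dsimp only; omega), if_pos ⟨rfl, h⟩]

lemma lab_horiz (hm : 3 ≤ m) (i i' : Fin m) (j : Fin (n+1)) (h : hsucc m i.val i'.val) :
    lab m n (i,j) (i',j) = BB n j.val * m + zrho m i.val + 1 := by
  have hi := i.isLt
  have hi' := i'.isLt
  unfold hsucc at h
  unfold lab
  rw [if_neg (by dsimp only; omega), if_neg (by dsimp only; omega),
    if_pos ⟨rfl, by unfold hsucc; dsimp only; omega⟩]

lemma lab_horiz' (hm : 3 ≤ m) (i i' : Fin m) (j : Fin (n+1)) (h : hsucc m i.val i'.val) :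
    lab m n (i',j) (i,j) = BB n j.val * m + zrho m i.val + 1 := by
  have hi := i.isLt
  have hi' := i'.isLt
  unfold hsucc at h
  unfold lab
  rw [if_neg (by dsimp only; omega), if_neg (by dsimp only; omega),
    if_neg (by dsimp only; unfold hsucc; omega), if_pos ⟨rfl, by unfold hsucc; dsimp only; omega⟩]

end Eval

section FinFacts
variable {m' : ℕ}

lemma sub_one_val_prevv (i : Fin (m'+3)) : (i - 1).val = prevv (m'+3) i.val := by
  rw [sub_one_val]; unfold prevv; have := i.isLt; split <;> omega

lemma hsucc_sub_one (i : Fin (m'+3)) : hsucc (m'+3) (i-1).val i.val := by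
  rw [sub_one_val]; unfold hsucc; have := i.isLt; split <;> omega

lemma hsucc_add_one (i : Fin (m'+3)) : hsucc (m'+3) i.val (i+1).val := by
  rw [add_one_val]; unfold hsucc; have := i.isLt; split <;> omega

lemma sub_ne_add (i : Fin (m'+3)) : i - 1 ≠ i + 1 := by
  rw [Ne, Fin.ext_iff, sub_one_val, add_one_val]
  have := i.isLt
  split <;> split <;> omega

lemma rho_pair_bound {i : ℕ} (h : i < m'+3) :
    zrho (m'+3) (prevv (m'+3) i) + zrho (m'+3) i ≤ 2*(m'+3) - 3 := by
  have h1 := zrho_lt (m := m'+3) (by omega) (prevv_lt (by omega) h)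
  have h2 := zrho_lt (m := m'+3) (by omega) h
  have hne : zrho (m'+3) (prevv (m'+3) i) ≠ zrho (m'+3) i := by
    intro hc
    have := zrho_inj (m := m'+3) (by omega) (prevv_lt (by omega) h) h hc
    unfold prevv at this; split at this <;> omega
  omega

end FinFacts

section Graph
variable (m' n : ℕ)

instance pdec : DecidableRel (pathGraph (n+1)).Adj :=
  fun _ _ => decidable_of_iff _ pathGraph_adj.symm

instance bdec : DecidableRel (cycleGraph (m'+3) □ pathGraph (n+1)).Adj :=
  fun _ _ => decidable_of_iff _ (boxProd_adj).symm

/-- the edge label function on `Sym2` -/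
noncomputable def fl : Sym2 (Fin (m'+3) × Fin (n+1)) → ℕ :=
  Sym2.lift ⟨lab (m'+3) n, lab_symm (m'+3) n (by omega)⟩

lemma fl_mk (v w : Fin (m'+3) × Fin (n+1)) : fl m' n s(v,w) = lab (m'+3) n v w := rfl

variable {n}

lemma path_nf_bot (hn : 2 ≤ n) (j : Fin (n+1)) (hj : j.val = 0) :
    ∃ y : Fin (n+1), (pathGraph (n+1)).neighborFinset j = {y} ∧ j.val + 1 = y.val := by
  refine ⟨⟨1, by omega⟩, ?_, by show j.val + 1 = 1; omega⟩
  ext w; have hw := w.isLt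
  simp only [mem_neighborFinset, pathGraph_adj, Finset.mem_singleton, Fin.ext_iff]
  omega

lemma path_nf_top (hn : 2 ≤ n) (j : Fin (n+1)) (hj : j.val = n) :
    ∃ y : Fin (n+1), (pathGraph (n+1)).neighborFinset j = {y} ∧ y.val + 1 = j.val := by
  refine ⟨⟨n-1, by omega⟩, ?_, by show n - 1 + 1 = j.val; omega⟩
  ext w; have hw := w.isLt
  simp only [mem_neighborFinset, pathGraph_adj, Finset.mem_singleton, Fin.ext_iff]
  omega

lemma path_nf_mid (j : Fin (n+1)) (h0 : j.val ≠ 0) (hn' : j.val ≠ n) :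
    ∃ y z : Fin (n+1), (pathGraph (n+1)).neighborFinset j = {y, z} ∧ y ≠ z ∧
      y.val + 1 = j.val ∧ j.val + 1 = z.val := by
  have hjl := j.isLt
  refine ⟨⟨j.val-1, by omega⟩, ⟨j.val+1, by omega⟩, ?_,
    Fin.ne_of_val_ne (by show j.val - 1 ≠ j.val + 1; omega),
    by show j.val - 1 + 1 = j.val; omega, rfl⟩
  ext w; have hw := w.isLt
  simp only [mem_neighborFinset, pathGraph_adj, Finset.mem_insert, Finset.mem_singleton,
    Fin.ext_iff]
  omega

variable {m'}

lemma vsum (v : Fin (m'+3) × Fin (n+1)) :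
    vertexSum (cycleGraph (m'+3) □ pathGraph (n+1)) (fl m' n) v =
      (∑ x ∈ (cycleGraph (m'+3)).neighborFinset v.1, lab (m'+3) n v (x, v.2))
      + ∑ y ∈ (pathGraph (n+1)).neighborFinset v.2, lab (m'+3) n v (v.1, y) := by
  unfold vertexSum
  have hf : (Finset.univ.filter (fun w => (cycleGraph (m'+3) □ pathGraph (n+1)).Adj v w))
      = (cycleGraph (m'+3) □ pathGraph (n+1)).neighborFinset v := by
    ext w; simp [mem_neighborFinset]
  rw [Finset.filter_congr_decidable, hf, neighborFinset_boxProd, Finset.sum_disjUnion]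
  congr 1
  · rw [Finset.sum_product]
    refine Finset.sum_congr rfl fun x _ => ?_
    rw [Finset.sum_singleton, fl_mk]
  · rw [Finset.sum_product, Finset.sum_singleton]
    refine Finset.sum_congr rfl fun y _ => ?_
    rw [fl_mk]

lemma cyc_part (i : Fin (m'+3)) (j : Fin (n+1)) :
    (∑ x ∈ (cycleGraph (m'+3)).neighborFinset i, lab (m'+3) n (i,j) (x, j))
      = 2 * (BB n j.val * (m'+3))
        + zrho (m'+3) (prevv (m'+3) i.val) + zrho (m'+3) i.val + 2 := by
  rw [cycleGraph_neighborFinset (n := m'+1), Finset.sum_pair (sub_ne_add i)]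
  rw [lab_horiz' (by omega) (i-1) i j (hsucc_sub_one i),
    lab_horiz (by omega) i (i+1) j (hsucc_add_one i), sub_one_val_prevv]
  ring

lemma S_bot (hn : 2 ≤ n) (i : Fin (m'+3)) (j : Fin (n+1)) (hj : j.val = 0) :
    vertexSum (cycleGraph (m'+3) □ pathGraph (n+1)) (fl m' n) (i,j) = (2*n+3)*(m'+3)
      + (zrho (m'+3) (prevv (m'+3) i.val) + zrho (m'+3) i.val + zsig (m'+3) i.val) + 3 := by
  obtain ⟨y, hnf, hy⟩ := path_nf_bot hn j hj
  rw [vsum, cyc_part, hnf, Finset.sum_singleton, lab_vert (by omega) i j y hy]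
  have hB : BB n j.val = n + 1 := by unfold BB; rw [hj]; split <;> omega
  rw [hB, hj]
  ring

lemma S_top (hn : 2 ≤ n) (i : Fin (m'+3)) (j : Fin (n+1)) (hj : j.val = n) :
    vertexSum (cycleGraph (m'+3) □ pathGraph (n+1)) (fl m' n) (i,j) = n*(m'+3)
      + (zrho (m'+3) (prevv (m'+3) i.val) + zrho (m'+3) i.val + zsig (m'+3) i.val) + 3 := by
  obtain ⟨y, hnf, hy⟩ := path_nf_top hn j hj
  rw [vsum, cyc_part, hnf, Finset.sum_singleton, lab_vert' (by omega) i y j hy]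
  have hB : BB n j.val = 0 := by unfold BB; rw [hj]; split <;> omega
  rw [hB, hy, hj]
  ring

lemma S_mid (i : Fin (m'+3)) (j : Fin (n+1)) (h0 : j.val ≠ 0) (hn' : j.val ≠ n) :
    vertexSum (cycleGraph (m'+3) □ pathGraph (n+1)) (fl m' n) (i,j)
      = (2*n+4*j.val+3)*(m'+3)
      + (zrho (m'+3) (prevv (m'+3) i.val) + zrho (m'+3) i.val + 2 * zsig (m'+3) i.val) + 4 := by
  obtain ⟨y, z, hnf, hyz, hy, hz⟩ := path_nf_mid j h0 hn'
  rw [vsum, cyc_part, hnf, Finset.sum_pair hyz, lab_vert' (by omega) i y j hy,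
    lab_vert (by omega) i j z hz]
  have hB : BB n j.val = n + 1 + j.val := by
    unfold BB; split <;> [rfl; (exfalso; have := j.isLt; omega)]
  rw [hB, hy]
  ring

lemma vsum_inj (hn : 2 ≤ n) :
    Function.Injective (vertexSum (cycleGraph (m'+3) □ pathGraph (n+1)) (fl m' n)) := by
  have M3 : (3:ℕ) ≤ m'+3 := by omega
  have key : ∀ (i : Fin (m'+3)) (j : Fin (n+1)),
      vertexSum (cycleGraph (m'+3) □ pathGraph (n+1)) (fl m' n) (i,j)
        = (if j.val = n then n else 2*n+4*j.val+3) * (m'+3)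
          + (if j.val = 0 ∨ j.val = n
             then zrho (m'+3) (prevv (m'+3) i.val) + zrho (m'+3) i.val
                    + zsig (m'+3) i.val + 3
             else zrho (m'+3) (prevv (m'+3) i.val) + zrho (m'+3) i.val
                    + 2*zsig (m'+3) i.val + 4) := by
    intro i j
    rcases eq_or_ne j.val 0 with h0 | h0
    · rw [S_bot hn i j h0, if_neg (by omega), if_pos (Or.inl h0), h0]; ring
    · rcases eq_or_ne j.val n with h1 | h1
      · rw [S_top hn i j h1, if_pos h1, if_pos (Or.inr h1)]; ring
      · rw [S_mid i j h0 h1, if_neg h1, if_neg (by omega)]; ring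
  rintro ⟨i, j⟩ ⟨i', j'⟩ h
  rw [key, key] at h
  have tb1 := rho_pair_bound (i.isLt)
  have tb2 := rho_pair_bound (i'.isLt)
  have sb1 := zsig_lt (m := m'+3) M3 i.isLt
  have sb2 := zsig_lt (m := m'+3) M3 i'.isLt
  have hrc := row_cancel (m := m'+3) (by split <;> omega) (by split <;> omega) h
  obtain ⟨hc1, hc2⟩ := hrc
  have hjl := j.isLt
  have hjl' := j'.isLt
  have hj : j.val = j'.val := by split_ifs at hc1 hc2 <;> omega
  have hj2 : j = j' := Fin.ext hj
  subst hj2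
  have hXY := Nat.add_left_cancel h
  have hi : i.val = i'.val := by
    split at hXY
    · exact TB_inj M3 i.isLt i'.isLt (by omega)
    · exact TI_inj M3 i.isLt i'.isLt (by omega)
  rw [Fin.ext hi]

lemma sum_ind1 (N : ℕ) : ∑ t ∈ Finset.range (N+1), (if t = 0 then 0 else 1) = N := by
  induction N with
  | zero => simp
  | succ k ih => rw [Finset.sum_range_succ, ih]; simp

lemma sum_ind2 (N : ℕ) : ∑ t ∈ Finset.range (N+1), (if t = N then 0 else 1) = N := by
  rw [Finset.sum_range_succ, if_pos rfl,
    Finset.sum_congr rfl (fun t ht => if_neg (by simp at ht; omega))]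
  simp

lemma path_deg (hn : 2 ≤ n) (j : Fin (n+1)) :
    (pathGraph (n+1)).degree j
      = (if j.val = 0 then 0 else 1) + (if j.val = n then 0 else 1) := by
  rw [SimpleGraph.degree]
  rcases eq_or_ne j.val 0 with h0 | h0
  · obtain ⟨y, hnf, _⟩ := path_nf_bot hn j h0
    rw [hnf, Finset.card_singleton, if_pos h0, if_neg (by omega)]
  · rcases eq_or_ne j.val n with h1 | h1
    · obtain ⟨y, hnf, _⟩ := path_nf_top hn j h1
      rw [hnf, Finset.card_singleton, if_neg h0, if_pos h1]
    · obtain ⟨y, z, hnf, hyz, _, _⟩ := path_nf_mid j h0 h1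
      rw [hnf, Finset.card_pair hyz, if_neg h0, if_neg h1]

lemma card_edges (hn : 2 ≤ n) :
    (cycleGraph (m'+3) □ pathGraph (n+1)).edgeFinset.card = (2*n+1)*(m'+3) := by
  have hh := SimpleGraph.sum_degrees_eq_twice_card_edges
    (cycleGraph (m'+3) □ pathGraph (n+1))
  have hs : 2 * (cycleGraph (m'+3) □ pathGraph (n+1)).edgeFinset.card
      = (m'+3) * (4*n+2) := by
    rw [← hh, ← Finset.univ_product_univ, Finset.sum_product]
    have hc : ∀ x : Fin (m'+3), (cycleGraph (m'+3)).degree x = 2 :=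
      fun _ => cycleGraph_degree_three_le (n := m')
    simp only [SimpleGraph.degree_boxProd, hc, path_deg hn, Finset.sum_add_distrib,
      Finset.sum_const, Finset.card_univ, Fintype.card_fin, smul_eq_mul,
      Fin.sum_univ_eq_sum_range]
    rw [Fin.sum_univ_eq_sum_range (fun t => if t = 0 then (0:ℕ) else 1) (n+1),
      Fin.sum_univ_eq_sum_range (fun t => if t = n then (0:ℕ) else 1) (n+1),
      sum_ind1, sum_ind2]
    ring
  have hr : (m'+3)*(4*n+2) = 2*((2*n+1)*(m'+3)) := by ring
  omega

lemma ncard_eq (hn : 2 ≤ n) :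
    (cycleGraph (m'+3) □ pathGraph (n+1)).edgeSet.ncard = (2*n+1)*(m'+3) := by
  rw [← SimpleGraph.coe_edgeFinset, Set.ncard_coe_finset]
  exact card_edges hn

lemma edge_cases {e : Sym2 (Fin (m'+3) × Fin (n+1))}
    (he : e ∈ (cycleGraph (m'+3) □ pathGraph (n+1)).edgeSet) :
    (∃ (i : Fin (m'+3)) (j j' : Fin (n+1)), j.val + 1 = j'.val ∧ e = s((i,j),(i,j')))
    ∨ (∃ (i i' : Fin (m'+3)) (j : Fin (n+1)),
        hsucc (m'+3) i.val i'.val ∧ e = s((i,j),(i',j))) := by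
  induction e using Sym2.ind with
  | _ v w =>
    obtain ⟨a, b⟩ := v
    obtain ⟨c, d⟩ := w
    rw [SimpleGraph.mem_edgeSet, SimpleGraph.boxProd_adj] at he
    rcases he with ⟨hc, hj⟩ | ⟨hp, hi⟩
    · dsimp only at hc hj
      subst hj
      rcases cycle_adj_iff.mp hc with hs | hs
      · exact Or.inr ⟨a, c, b, hs, rfl⟩
      · exact Or.inr ⟨c, a, b, hs, Sym2.eq_swap⟩
    · dsimp only at hp hi
      subst hi
      rcases pathGraph_adj.mp hp with h | h
      · exact Or.inl ⟨a, b, d, h, rfl⟩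
      · exact Or.inl ⟨a, d, b, h, Sym2.eq_swap⟩

lemma BB_le (j : ℕ) : BB n j ≤ 2*n := by unfold BB; split <;> omega

lemma fl_mapsTo (hn : 2 ≤ n) :
    Set.MapsTo (fl m' n) (cycleGraph (m'+3) □ pathGraph (n+1)).edgeSet
      (Set.Icc 1 ((2*n+1)*(m'+3))) := by
  intro e he
  have M3 : (3:ℕ) ≤ m'+3 := by omega
  have hprod : (2*n)*(m'+3) + (m'+3) = (2*n+1)*(m'+3) := by ring
  rcases edge_cases he with ⟨i, j, j', hj, rfl⟩ | ⟨i, i', j, hs, rfl⟩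
  · rw [fl_mk, lab_vert M3 i j j' hj]
    have hsl := zsig_lt M3 i.isLt
    have hj' := j'.isLt
    have hb : (j.val+1)*(m'+3) ≤ (2*n)*(m'+3) := Nat.mul_le_mul_right _ (by omega)
    exact Set.mem_Icc.mpr ⟨by omega, by omega⟩
  · rw [fl_mk, lab_horiz M3 i i' j hs]
    have hrl := zrho_lt M3 i.isLt
    have hb : BB n j.val * (m'+3) ≤ (2*n)*(m'+3) :=
      Nat.mul_le_mul_right _ (BB_le j.val)
    exact Set.mem_Icc.mpr ⟨by omega, by omega⟩

lemma fl_injOn (hn : 2 ≤ n) :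
    Set.InjOn (fl m' n) (cycleGraph (m'+3) □ pathGraph (n+1)).edgeSet := by
  intro e he e' he' hfe
  have M3 : (3:ℕ) ≤ m'+3 := by omega
  rcases edge_cases he with ⟨i1, j1, j1', hj1, rfl⟩ | ⟨i1, i1', j1, hs1, rfl⟩ <;>
    rcases edge_cases he' with ⟨i2, j2, j2', hj2, rfl⟩ | ⟨i2, i2', j2, hs2, rfl⟩
  · -- vert vert
    rw [fl_mk, fl_mk, lab_vert M3 i1 j1 j1' hj1, lab_vert M3 i2 j2 j2' hj2] at hfe
    obtain ⟨hb, hr⟩ := block_eq (zsig_lt M3 i1.isLt) (zsig_lt M3 i2.isLt)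
      (show (j1.val+1)*(m'+3) + zsig (m'+3) i1.val
          = (j2.val+1)*(m'+3) + zsig (m'+3) i2.val by omega)
    have hi : i1 = i2 := Fin.ext (zsig_inj M3 i1.isLt i2.isLt hr)
    have hjj : j1 = j2 := Fin.ext (by omega)
    have hjj' : j1' = j2' := Fin.ext (by omega)
    rw [hi, hjj, hjj']
  · -- vert horiz : impossible
    exfalso
    rw [fl_mk, fl_mk, lab_vert M3 i1 j1 j1' hj1, lab_horiz M3 i2 i2' j2 hs2] at hfe
    obtain ⟨hb, -⟩ := block_eq (zsig_lt M3 i1.isLt) (zrho_lt M3 i2.isLt)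
      (show (j1.val+1)*(m'+3) + zsig (m'+3) i1.val
          = BB n j2.val * (m'+3) + zrho (m'+3) i2.val by omega)
    have hj1' := j1'.isLt
    have hj2l := j2.isLt
    unfold BB at hb
    split at hb <;> omega
  · -- horiz vert : impossible
    exfalso
    rw [fl_mk, fl_mk, lab_horiz M3 i1 i1' j1 hs1, lab_vert M3 i2 j2 j2' hj2] at hfe
    obtain ⟨hb, -⟩ := block_eq (zrho_lt M3 i1.isLt) (zsig_lt M3 i2.isLt)
      (show BB n j1.val * (m'+3) + zrho (m'+3) i1.val
          = (j2.val+1)*(m'+3) + zsig (m'+3) i2.val by omega)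
    have hj2' := j2'.isLt
    have hj1l := j1.isLt
    unfold BB at hb
    split at hb <;> omega
  · -- horiz horiz
    rw [fl_mk, fl_mk, lab_horiz M3 i1 i1' j1 hs1, lab_horiz M3 i2 i2' j2 hs2] at hfe
    obtain ⟨hb, hr⟩ := block_eq (zrho_lt M3 i1.isLt) (zrho_lt M3 i2.isLt)
      (show BB n j1.val * (m'+3) + zrho (m'+3) i1.val
          = BB n j2.val * (m'+3) + zrho (m'+3) i2.val by omega)
    have hi : i1 = i2 := Fin.ext (zrho_inj M3 i1.isLt i2.isLt hr)
    have hjj : j1 = j2 := by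
      refine Fin.ext ?_
      have hj1l := j1.isLt
      have hj2l := j2.isLt
      unfold BB at hb
      split at hb <;> split at hb <;> omega
    have hii' : i1' = i2' := by
      refine Fin.ext ?_
      rw [hi] at hs1
      unfold hsucc at hs1 hs2
      have h1 := i1'.isLt
      have h2 := i2'.isLt
      omega
    rw [hi, hjj, hii']

end Graph

/-- `C[m] □ P[n+1]` is antimagic for all `m ≥ 3`, `n ≥ 2`. -/
theorem cyclePathProd_isAntimagic (m n : ℕ) (hm : 3 ≤ m) (hn : 2 ≤ n) :
    IsAntimagic (cycleGraph m □ pathGraph (n + 1)) := by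
  obtain ⟨m', rfl⟩ : ∃ k, m = k + 3 := ⟨m - 3, by omega⟩
  refine ⟨fl m' n, ?_, vsum_inj hn⟩
  rw [ncard_eq hn]
  refine ⟨fl_mapsTo hn, fl_injOn hn, ?_⟩
  have himg : fl m' n '' (cycleGraph (m'+3) □ pathGraph (n+1)).edgeSet
      ⊆ Set.Icc 1 ((2*n+1)*(m'+3)) := (fl_mapsTo hn).image_subset
  have hq : 1 ≤ (2*n+1)*(m'+3) := by
    have : 1*1 ≤ (2*n+1)*(m'+3) := Nat.mul_le_mul (by omega) (by omega)
    omega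
  have heq : fl m' n '' (cycleGraph (m'+3) □ pathGraph (n+1)).edgeSet
      = Set.Icc 1 ((2*n+1)*(m'+3)) := by
    refine Set.eq_of_subset_of_ncard_le himg ?_ (Set.finite_Icc _ _)
    rw [Set.ncard_image_of_injOn (fl_injOn hn), ncard_eq hn, ← Finset.coe_Icc, Set.ncard_coe_finset, Nat.card_Icc]
    omega
  rw [Set.SurjOn, heq]
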